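/- arXiv:1108.0098 — 2 statements merged into one kernel-verified Lean document; each statement's English description precedes it below -/
import Mathlib

section
/- Let γ : [0,∞) → ℝ^d be a C^1 curve parametrized by Euclidean arc length with γ(0)=0, and suppose there exist D ≥ 1 and L ≥ 0 such that for all l ≥ L, r(l) ≤ l ≤ D·r(l), where r(l) = |γ(l)|. Set β = 1/(2D) and δ = 1/(2D−1), and let F = {l : ṙ(l) > β and r(l) = sup_{l'≤l} r(l')}. Then for all l ≥ L, Leb(F ∩ [0,l]) ≥ δ·l. -/
open Set MeasureTheory

theorem image_vol_le {s : Set ℝ} {f f' : ℝ → ℝ} {C : ℝ} (hs : MeasurableSet s)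
    (hf' : ∀ x ∈ s, HasDerivWithinAt f (f' x) s x) (hb : ∀ x ∈ s, |f' x| ≤ C) :
    volume (f '' s) ≤ ENNReal.ofReal C * volume s := by
  calc volume (f '' s)
      ≤ ∫⁻ x in s, ENNReal.ofReal |(((1 : ℝ →L[ℝ] ℝ).smulRight (f' x))).det| :=
        addHaar_image_le_lintegral_abs_det_fderiv volume hs
          (fun x hx => (hf' x hx).hasFDerivWithinAt)
    _ ≤ ∫⁻ _x in s, ENNReal.ofReal C := by
        refine setLIntegral_mono measurable_const (fun x hx => ?_)
        rw [ContinuousLinearMap.det_smulRight, ContinuousLinearMap.one_apply, one_mul]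
        exact ENNReal.ofReal_le_ofReal (hb x hx)
    _ = ENNReal.ofReal C * volume s := setLIntegral_const _ _

/-- Frontier density lemma: if `r(l) ≤ l ≤ D·r(l)` for `l ≥ L`, then the set
`F` of frontier times (with `β = 1/(2D)`) has Lebesgue density at least
`δ = 1/(2D−1)` in `[0,l]` for all `l ≥ L`. -/
theorem stmt_4 (d : ℕ) (γ : ℝ → EuclideanSpace ℝ (Fin d))
    (hγC1 : ContDiff ℝ 1 γ) (hγ0 : γ 0 = 0)
    (hunit : ∀ l : ℝ, 0 ≤ l → ‖deriv γ l‖ = 1)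
    (r : ℝ → ℝ) (hr : r = fun l => ‖γ l‖)
    (D L : ℝ) (hD : 1 ≤ D) (hL : 0 ≤ L)
    (hcomp : ∀ l : ℝ, L ≤ l → r l ≤ l ∧ l ≤ D * r l)
    (β δ : ℝ) (hβ : β = 1 / (2 * D)) (hδ : δ = 1 / (2 * D - 1))
    (F : Set ℝ)
    (hF : F = { l : ℝ | 0 ≤ l ∧ deriv r l > β ∧ r l = sSup (r '' Icc 0 l) }) :
    ∀ l : ℝ, L ≤ l → δ * l ≤ (volume (F ∩ Icc 0 l)).toReal := by
  intro l hl
  have hD0 : (0:ℝ) < D := lt_of_lt_of_le one_pos hD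
  have hβ0 : 0 < β := by rw [hβ]; positivity
  have hl0 : 0 ≤ l := le_trans hL hl
  -- basic facts about r
  have hrcont : Continuous r := by rw [hr]; exact hγC1.continuous.norm
  have hr0 : r 0 = 0 := by rw [hr]; simp [hγ0]
  have hrnn : ∀ t, 0 ≤ r t := fun t => by rw [hr]; positivity
  have hγdiff : Differentiable ℝ γ := hγC1.differentiable one_ne_zero
  have hlip : ∀ a b : ℝ, 0 ≤ a → a ≤ b → |r b - r a| ≤ b - a := by
    intro a b ha hab
    have h1 : ∀ x ∈ Ici (0:ℝ), HasDerivWithinAt γ (deriv γ x) (Ici 0) x :=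
      fun x _ => (hγdiff x).hasDerivAt.hasDerivWithinAt
    have h2 : ∀ x ∈ Ici (0:ℝ), ‖deriv γ x‖ ≤ 1 := fun x hx => le_of_eq (hunit x hx)
    have key := (convex_Ici (0:ℝ)).norm_image_sub_le_of_norm_hasDerivWithin_le h1 h2
      ha (le_trans ha hab)
    calc |r b - r a| ≤ ‖γ b - γ a‖ := by rw [hr]; exact abs_norm_sub_norm_le _ _
      _ ≤ 1 * ‖b - a‖ := key
      _ = b - a := by rw [one_mul, Real.norm_eq_abs, abs_of_nonneg (by linarith)]
  have hrle : ∀ t : ℝ, 0 ≤ t → r t ≤ t := by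
    intro t ht
    have h := le_of_abs_le (hlip 0 t le_rfl ht)
    rw [hr0] at h; linarith
  -- the running supremum m
  set m : ℝ → ℝ := fun t => sSup (r '' Icc 0 t) with hm
  have hbdd : ∀ t : ℝ, BddAbove (r '' Icc 0 t) := by
    intro t
    refine ⟨max t 0, ?_⟩
    rintro y ⟨s, ⟨hs0, hst⟩, rfl⟩
    exact le_trans (hrle s hs0) (le_trans hst (le_max_left _ _))
  have hne : ∀ t : ℝ, 0 ≤ t → (r '' Icc 0 t).Nonempty :=
    fun t ht => ⟨r 0, 0, ⟨le_rfl, ht⟩, rfl⟩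
  have hrm : ∀ t : ℝ, 0 ≤ t → r t ≤ m t := fun t ht => le_csSup (hbdd t) ⟨t, ⟨ht, le_rfl⟩, rfl⟩
  have hm0 : m 0 = 0 := by
    simp only [hm, Icc_self, image_singleton, csSup_singleton, hr0]
  have hmle : ∀ t : ℝ, 0 ≤ t → m t ≤ t := by
    intro t ht
    refine csSup_le (hne t ht) ?_
    rintro y ⟨u, ⟨hu0, hut⟩, rfl⟩
    exact le_trans (hrle u hu0) hut
  have hmono : Monotone m := by
    intro t t' htt'
    rcases lt_or_ge t 0 with ht | ht
    · have he : m t = 0 := by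
        simp [hm, Icc_eq_empty (not_le.mpr ht), Real.sSup_empty]
      rw [he]
      rcases lt_or_ge t' 0 with ht' | ht'
      · simp [hm, Icc_eq_empty (not_le.mpr ht'), Real.sSup_empty]
      · have := le_csSup (hbdd t') ⟨0, ⟨le_rfl, ht'⟩, rfl⟩
        rw [hr0] at this; exact this
    · exact csSup_le_csSup (hbdd t') (hne t ht) (image_mono (Icc_subset_Icc_right htt'))
  have hmmeas : Measurable m := hmono.measurable
  have hmlip' : ∀ a b : ℝ, 0 ≤ a → a ≤ b → m b ≤ m a + (b - a) := by
    intro a b ha hab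
    refine csSup_le (hne b (le_trans ha hab)) ?_
    rintro y ⟨u, ⟨hu0, hub⟩, rfl⟩
    rcases le_total u a with h | h
    · have := le_csSup (hbdd a) (⟨u, ⟨hu0, h⟩, rfl⟩ : r u ∈ r '' Icc 0 a)
      linarith
    · have h1 := le_of_abs_le (hlip a u ha h)
      have h2 := hrm a ha
      linarith
  have hmcont : ContinuousOn m (Icc 0 l) := by
    have : LipschitzOnWith 1 m (Ici 0) := by
      rw [lipschitzOnWith_iff_dist_le_mul]
      intro a ha b hb
      rw [NNReal.coe_one, one_mul, Real.dist_eq, Real.dist_eq]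
      rcases le_total a b with h | h
      · have h1 := hmlip' a b ha h
        have h2 := hmono h
        rw [abs_of_nonpos (by linarith), abs_of_nonpos (by linarith)]; linarith
      · have h1 := hmlip' b a hb h
        have h2 := hmono h
        rw [abs_of_nonneg (by linarith), abs_of_nonneg (by linarith)]; linarith
    exact this.continuousOn.mono (Icc_subset_Ici_self)
  -- sets
  set S : Set ℝ := {t | r t = m t} with hSdef
  have hSmeas : MeasurableSet S := measurableSet_eq_fun hrcont.measurable hmmeas
  have hFeq : F = Ici 0 ∩ ({t | β < deriv r t} ∩ S) := by
    rw [hF]; ext t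
    simp only [mem_setOf_eq, mem_inter_iff, mem_Ici, hSdef, hm, and_assoc, gt_iff_lt]
  have hFmeas : MeasurableSet F := by
    rw [hFeq]
    exact measurableSet_Ici.inter
      ((measurableSet_lt measurable_const (measurable_deriv r)).inter hSmeas)
  -- differentiability of r away from zeros of γ
  have hrdiff : ∀ t : ℝ, 0 < r t → DifferentiableAt ℝ r t := by
    intro t h0
    have hγt : γ t ≠ 0 := by
      intro hc
      rw [hr] at h0; simp only [hc, norm_zero] at h0; exact lt_irrefl 0 h0
    rw [hr]
    exact (hγdiff t).norm ℝ hγt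
  -- L1 : derivative bounded by 1
  have L1 : ∀ t : ℝ, 0 ≤ t → DifferentiableAt ℝ r t → |deriv r t| ≤ 1 := by
    intro t ht hdiff
    have htend : Filter.Tendsto (slope r t) (nhdsWithin t (Ioi t)) (nhds (deriv r t)) :=
      (hasDerivAt_iff_tendsto_slope.1 hdiff.hasDerivAt).mono_left
        (nhdsWithin_mono t (fun x hx => ne_of_gt hx))
    have habs : Filter.Tendsto (fun s => |slope r t s|) (nhdsWithin t (Ioi t))
        (nhds |deriv r t|) := htend.abs
    refine le_of_tendsto habs ?_
    filter_upwards [self_mem_nhdsWithin] with s hs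
    have hs' : t < s := hs
    rw [slope_def_field, abs_div]
    rw [div_le_one (by rw [abs_of_pos (by linarith)]; linarith)]
    rw [abs_of_pos (show (0:ℝ) < s - t by linarith)]
    exact hlip t s ht hs'.le
  -- L2 : derivative nonneg at running-max points
  have L2 : ∀ t : ℝ, 0 < t → r t = m t → DifferentiableAt ℝ r t → 0 ≤ deriv r t := by
    intro t ht hrt hdiff
    have htend : Filter.Tendsto (slope r t) (nhdsWithin t (Iio t)) (nhds (deriv r t)) :=
      (hasDerivAt_iff_tendsto_slope.1 hdiff.hasDerivAt).mono_left
        (nhdsWithin_mono t (fun x hx => ne_of_lt hx))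
    refine ge_of_tendsto htend ?_
    filter_upwards [Ioo_mem_nhdsLT ht] with s hs
    obtain ⟨hs0, hst⟩ := hs
    rw [slope_def_field]
    have h1 : r s ≤ r t := by
      have h2 := hrm s hs0.le
      have h3 := hmono hst.le
      linarith
    exact div_nonneg_iff.2 (Or.inr ⟨by linarith, by linarith⟩)
  -- L3 : m locally constant off the frontier set
  have L3 : ∀ t : ℝ, 0 < t → r t < m t → HasDerivAt m 0 t := by
    intro t ht hlt
    have hc0 : 0 < (m t - r t) / 2 := by linarith
    obtain ⟨ε, hε0, hεb⟩ := Metric.continuousAt_iff.1 hrcont.continuousAt _ hc0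
    set ε' := min ε t with hε'
    have hε'0 : 0 < ε' := lt_min hε0 ht
    have hε't : ε' ≤ t := min_le_right _ _
    have hε'ε : ε' ≤ ε := min_le_left _ _
    have hconst : ∀ s : ℝ, |s - t| < ε' → m s = m t := by
      intro s hst
      have hs0 : 0 ≤ s := by
        have := abs_lt.1 hst; linarith
      have hclose : ∀ u : ℝ, |u - t| < ε' → r u ≤ m t - (m t - r t) / 2 := by
        intro u hu
        have := hεb (show dist u t < ε by rw [Real.dist_eq]; linarith [abs_lt.1 hu, hε'ε])
        rw [Real.dist_eq] at this
        have := abs_lt.1 this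
        linarith
      rcases le_total t s with h | h
      · refine le_antisymm ?_ (hmono h)
        refine csSup_le (hne s hs0) ?_
        rintro y ⟨u, ⟨hu0, hus⟩, rfl⟩
        rcases le_total u t with h2 | h2
        · exact le_csSup (hbdd t) ⟨u, ⟨hu0, h2⟩, rfl⟩
        · have : |u - t| < ε' := by
            rw [abs_of_nonneg (by linarith)]
            have := abs_lt.1 hst; linarith
          linarith [hclose u this]
      · refine le_antisymm (hmono h) ?_
        have hkey : m t ≤ max (m s) (m t - (m t - r t) / 2) := by
          refine csSup_le (hne t ht.le) ?_
          rintro y ⟨u, ⟨hu0, hut⟩, rfl⟩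
          rcases le_total u s with h2 | h2
          · exact le_max_of_le_left (le_csSup (hbdd s) ⟨u, ⟨hu0, h2⟩, rfl⟩)
          · have : |u - t| < ε' := by
              rw [abs_of_nonpos (by linarith)]
              have := abs_lt.1 hst; linarith
            exact le_max_of_le_right (hclose u this)
        rcases le_max_iff.1 hkey with h3 | h3
        · exact h3
        · linarith
    have heq : m =ᶠ[nhds t] fun _ => m t := by
      filter_upwards [Metric.ball_mem_nhds t hε'0] with s hs
      rw [Metric.mem_ball, Real.dist_eq] at hs
      exact hconst s hs
    exact (hasDerivAt_const t (m t)).congr_of_eventuallyEq heq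
  -- decomposition sets
  set A : Set ℝ := F ∩ Icc 0 l with hA
  set B1 : Set ℝ := ((Icc 0 l ∩ S) \ F) \ {t | m t = 0} with hB1
  set B2 : Set ℝ := Icc 0 l \ S with hB2
  set C : Set ℝ := Icc 0 l ∩ {t | m t = 0} with hC
  have hAmeas : MeasurableSet A := hFmeas.inter measurableSet_Icc
  have hB1meas : MeasurableSet B1 :=
    ((measurableSet_Icc.inter hSmeas).diff hFmeas).diff
      (measurableSet_eq_fun hmmeas measurable_const)
  have hB2meas : MeasurableSet B2 := measurableSet_Icc.diff hSmeas
  have hcover : Icc 0 l ⊆ A ∪ (B1 ∪ (B2 ∪ C)) := by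
    intro t ht
    by_cases h1 : r t = m t
    · by_cases h2 : m t = 0
      · exact Or.inr (Or.inr (Or.inr ⟨ht, h2⟩))
      · by_cases h3 : t ∈ F
        · exact Or.inl ⟨h3, ht⟩
        · exact Or.inr (Or.inl ⟨⟨⟨ht, h1⟩, h3⟩, h2⟩)
    · exact Or.inr (Or.inr (Or.inl ⟨ht, h1⟩))
  -- image bounds
  have hFmem : ∀ t ∈ F, 0 ≤ t ∧ β < deriv r t ∧ r t = m t := by
    intro t htF
    rw [hF] at htF
    exact htF
  have hboundA : volume (m '' A) ≤ ENNReal.ofReal 1 * volume A := by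
    refine image_vol_le (f' := fun t => deriv r t) hAmeas (fun t htA => ?_) (fun t htA => ?_)
    · obtain ⟨h0, hd, hrm'⟩ := hFmem t htA.1
      have hdiff : DifferentiableAt ℝ r t := by
        by_contra hnd
        rw [deriv_zero_of_not_differentiableAt hnd] at hd
        linarith
      refine (hdiff.hasDerivAt.hasDerivWithinAt).congr ?_ hrm'.symm
      intro y hy
      exact (hFmem y hy.1).2.2.symm
    · obtain ⟨h0, hd, _⟩ := hFmem t htA.1
      have hdiff : DifferentiableAt ℝ r t := by
        by_contra hnd
        rw [deriv_zero_of_not_differentiableAt hnd] at hd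
        linarith
      exact L1 t h0 hdiff
  have hB1fact : ∀ t ∈ B1, 0 < t ∧ r t = m t ∧ 0 ≤ deriv r t ∧ deriv r t ≤ β ∧
      DifferentiableAt ℝ r t := by
    intro t htB
    obtain ⟨⟨⟨htI, htS⟩, htF⟩, htm⟩ := htB
    have hmt0 : 0 < m t := lt_of_le_of_ne (le_trans (hrnn t) (hrm t htI.1)) (Ne.symm htm)
    have ht0 : 0 < t := lt_of_lt_of_le hmt0 (hmle t htI.1)
    have hrt0 : 0 < r t := by rw [htS]; exact hmt0
    have hdiff := hrdiff t hrt0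
    have hd2 : deriv r t ≤ β := by
      by_contra hc
      push_neg at hc
      exact htF (by rw [hF]; exact ⟨htI.1, hc, htS⟩)
    exact ⟨ht0, htS, L2 t ht0 htS hdiff, hd2, hdiff⟩
  have hboundB1 : volume (m '' B1) ≤ ENNReal.ofReal β * volume B1 := by
    refine image_vol_le (f' := fun t => deriv r t) hB1meas (fun t htB => ?_) (fun t htB => ?_)
    · obtain ⟨ht0, htS, _, _, hdiff⟩ := hB1fact t htB
      refine (hdiff.hasDerivAt.hasDerivWithinAt).congr ?_ htS.symm
      intro y hy
      exact (hB1fact y hy).2.1.symm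
    · obtain ⟨_, _, hd1, hd2, _⟩ := hB1fact t htB
      rw [abs_of_nonneg hd1]; exact hd2
  have hboundB2 : volume (m '' B2) ≤ ENNReal.ofReal 0 * volume B2 := by
    refine image_vol_le (f' := fun _ => (0:ℝ)) hB2meas (fun t htB => ?_) (fun t htB => ?_)
    · obtain ⟨htI, htS⟩ := htB
      have hlt : r t < m t := lt_of_le_of_ne (hrm t htI.1) htS
      have ht0 : 0 < t := by
        rcases lt_or_eq_of_le htI.1 with h | h
        · exact h
        · exfalso; rw [← h, hr0, hm0] at hlt; exact lt_irrefl 0 hlt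
      exact (L3 t ht0 hlt).hasDerivWithinAt
    · simp
  have hboundC : volume (m '' C) = 0 := by
    refine measure_mono_null (fun y hy => ?_) (measure_singleton (0:ℝ))
    obtain ⟨t, ⟨_, htm⟩, rfl⟩ := hy
    exact htm
  -- main chain
  have hIcc : volume (Icc 0 l) = ENNReal.ofReal l := by
    rw [Real.volume_Icc, sub_zero]
  have hAle : volume A ≤ ENNReal.ofReal l := by
    rw [← hIcc]; exact measure_mono (inter_subset_right)
  have hAfin : volume A ≠ ⊤ := ne_top_of_le_ne_top (by simp) hAle
  have hB1le : volume B1 ≤ ENNReal.ofReal l - volume A := by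
    have hsub : B1 ⊆ Icc 0 l \ A := by
      intro t htB
      exact ⟨htB.1.1.1, fun hc => htB.1.2 hc.1⟩
    calc volume B1 ≤ volume (Icc 0 l \ A) := measure_mono hsub
      _ = volume (Icc 0 l) - volume A :=
        measure_diff (inter_subset_right) hAmeas.nullMeasurableSet hAfin
      _ = ENNReal.ofReal l - volume A := by rw [hIcc]
  have hkey : ENNReal.ofReal (m l) ≤ volume A + ENNReal.ofReal β * (ENNReal.ofReal l - volume A) := by
    calc ENNReal.ofReal (m l) = volume (Icc (m 0) (m l)) := by
          rw [Real.volume_Icc, hm0, sub_zero]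
      _ ≤ volume (m '' Icc 0 l) := measure_mono (intermediate_value_Icc hl0 hmcont)
      _ ≤ volume (m '' (A ∪ (B1 ∪ (B2 ∪ C)))) := measure_mono (image_mono hcover)
      _ ≤ volume (m '' A) + (volume (m '' B1) + (volume (m '' B2) + volume (m '' C))) := by
          rw [image_union, image_union, image_union]
          exact le_trans (measure_union_le _ _)
            (add_le_add le_rfl (le_trans (measure_union_le _ _)
              (add_le_add le_rfl (measure_union_le _ _))))
      _ ≤ ENNReal.ofReal 1 * volume A + (ENNReal.ofReal β * volume B1 + (0 + 0)) := by
          refine add_le_add hboundA (add_le_add hboundB1 (add_le_add ?_ hboundC.le))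
          simpa using hboundB2
      _ = volume A + ENNReal.ofReal β * volume B1 := by
          rw [ENNReal.ofReal_one, one_mul, add_zero, add_zero]
      _ ≤ volume A + ENNReal.ofReal β * (ENNReal.ofReal l - volume A) := by
          exact add_le_add le_rfl (mul_le_mul_right hB1le _)
  -- convert to reals
  set a : ℝ := (volume A).toReal with ha
  have hsubfin : ENNReal.ofReal l - volume A ≠ ⊤ := by
    exact ne_top_of_le_ne_top (by simp) (tsub_le_self.trans le_rfl)
  have hRHSfin : volume A + ENNReal.ofReal β * (ENNReal.ofReal l - volume A) ≠ ⊤ := by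
    apply ENNReal.add_ne_top.2
    exact ⟨hAfin, ENNReal.mul_ne_top (by simp) hsubfin⟩
  have hml : m l ≤ a + β * (l - a) := by
    have := (ENNReal.ofReal_le_iff_le_toReal hRHSfin).1 hkey
    rw [ENNReal.toReal_add hAfin (ENNReal.mul_ne_top (by simp) hsubfin),
      ENNReal.toReal_mul, ENNReal.toReal_ofReal hβ0.le,
      ENNReal.toReal_sub_of_le hAle (by simp), ENNReal.toReal_ofReal hl0] at this
    exact this
  have hal : a ≤ l := by
    have := ENNReal.toReal_mono (by simp) hAle
    rwa [ENNReal.toReal_ofReal hl0] at this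
  have ha0 : 0 ≤ a := ENNReal.toReal_nonneg
  -- finish with algebra
  have hcomp' := (hcomp l hl).2
  have hrml := hrm l hl0
  show δ * l ≤ a
  rw [hδ]
  rw [hβ] at hml
  have h2D : (0:ℝ) < 2 * D - 1 := by linarith
  rw [div_mul_eq_mul_div, div_le_iff₀ h2D, one_mul]
  have hml2 : l / D ≤ a + 1 / (2 * D) * (l - a) := by
    calc l / D ≤ r l := by rw [div_le_iff₀ hD0]; linarith
      _ ≤ m l := hrml
      _ ≤ _ := hml
  have := mul_le_mul_of_nonneg_left hml2 (le_of_lt hD0)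
  rw [mul_div_cancel₀ _ (ne_of_gt hD0)] at this
  have hexp : D * (a + 1 / (2 * D) * (l - a)) = D * a + (l - a) / 2 := by
    field_simp
  rw [hexp] at this
  linarith
end

section
/- Let D ≥ 1 and let γ : [0, ∞) → ℝ^d be a unit-Euclidean-speed curve from 0 such that for some L ≥ 0 and all l ≥ L, |γ(l)| ≤ l ≤ D|γ(l)|. Fix ρ̃ > 0 and define times l_0 = 0 and l_j = inf{l ∈ F : l > l_{j-1} and |γ(l) − γ(l_{j'})| ≥ 2ρ̃ for all j' < j}, where F is the frontier-time set for β = 1/(2D) as above, and δ = 1/(2D−1). Then with A = 8ρ̃/(βδ): for every j with l_j ≥ L (and l_j finite), l_j ≤ A·j. -/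
open Set

namespace Stmt18
open Set MeasureTheory Filter Topology

variable {r : ℝ → ℝ}

/-- running supremum -/
noncomputable def RS (r : ℝ → ℝ) : ℝ → ℝ := fun s => sSup (r '' Icc 0 s)

section basic

variable (h0 : r 0 = 0) (hlip : ∀ ⦃s t : ℝ⦄, 0 ≤ s → s ≤ t → |r t - r s| ≤ t - s)

include h0 hlip

theorem r_le (t : ℝ) (ht : 0 ≤ t) : r t ≤ t := by
  have := hlip le_rfl ht
  rw [h0, sub_zero] at this
  exact (abs_le.1 this).2.trans (by linarith)

theorem RS_le_self {t : ℝ} (ht : 0 ≤ t) : RS r t ≤ t := by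
  apply Real.sSup_le _ ht
  rintro x ⟨u, hu, rfl⟩
  exact (r_le h0 hlip u hu.1).trans hu.2

theorem bddA {t : ℝ} : BddAbove (r '' Icc 0 t) := by
  rcases le_or_gt 0 t with ht | ht
  · exact ⟨t, by rintro x ⟨u, hu, rfl⟩; exact (r_le h0 hlip u hu.1).trans hu.2⟩
  · simp [Icc_eq_empty_of_lt ht]

theorem le_RS {t : ℝ} (ht : 0 ≤ t) : r t ≤ RS r t :=
  le_csSup (bddA h0 hlip) ⟨t, ⟨ht, le_rfl⟩, rfl⟩

theorem RS_nonneg {t : ℝ} (ht : 0 ≤ t) : 0 ≤ RS r t := by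
  have := le_csSup (bddA h0 hlip (t := t)) ⟨0, ⟨le_rfl, ht⟩, rfl⟩
  rwa [h0] at this

theorem RS_of_neg {t : ℝ} (ht : t < 0) : RS r t = 0 := by
  rw [RS]; simp only [Icc_eq_empty_of_lt ht, image_empty, Real.sSup_empty]

theorem RS_mono : Monotone (RS r) := by
  intro s t hst
  rcases le_or_gt 0 s with hs | hs
  · exact csSup_le_csSup (bddA h0 hlip) ⟨r 0, ⟨0, ⟨le_rfl, hs⟩, rfl⟩⟩
      (Set.image_mono (Icc_subset_Icc le_rfl hst))
  · rcases le_or_gt 0 t with ht | ht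
    · rw [RS_of_neg h0 hlip hs]
      exact RS_nonneg h0 hlip ht
    · rw [RS_of_neg h0 hlip hs, RS_of_neg h0 hlip ht]

theorem RS_sub_le {s t : ℝ} (hst : s ≤ t) : RS r t - RS r s ≤ t - s := by
  rcases le_or_gt 0 s with hs | hs
  · have : RS r t ≤ RS r s + (t - s) := by
      apply Real.sSup_le
      · rintro x ⟨u, hu, rfl⟩
        rcases le_or_gt u s with hus | hus
        · have : r u ≤ RS r s := le_csSup (bddA h0 hlip (t := s)) ⟨u, ⟨hu.1, hus⟩, rfl⟩
          linarith
        · have h1 : r u - r s ≤ u - s := (abs_le.1 (hlip hs hus.le)).2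
          have h2 := le_RS h0 hlip hs
          have : u ≤ t := hu.2
          linarith
      · have := RS_nonneg h0 hlip hs; linarith
    linarith
  · rcases le_or_gt 0 t with ht | ht
    · rw [RS_of_neg h0 hlip hs]
      have := RS_le_self h0 hlip ht; linarith
    · rw [RS_of_neg h0 hlip hs, RS_of_neg h0 hlip ht]; linarith

theorem RS_lip : LipschitzWith 1 (RS r) := by
  apply LipschitzWith.of_dist_le_mul
  intro s t
  rw [Real.dist_eq, Real.dist_eq, NNReal.coe_one, one_mul]
  rcases le_total s t with h | h
  · rw [abs_sub_comm s t, abs_sub_comm (RS r s) (RS r t),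
      abs_of_nonneg (sub_nonneg.2 (RS_mono h0 hlip h)), abs_of_nonneg (sub_nonneg.2 h)]
    exact RS_sub_le h0 hlip h
  · rw [abs_of_nonneg (sub_nonneg.2 (RS_mono h0 hlip h)), abs_of_nonneg (sub_nonneg.2 h)]
    exact RS_sub_le h0 hlip h

/-- running sup as a Stieltjes function -/
noncomputable def RSF (h0 : r 0 = 0)
    (hlip : ∀ ⦃s t : ℝ⦄, 0 ≤ s → s ≤ t → |r t - r s| ≤ t - s) : StieltjesFunction ℝ where
  toFun := RS r
  mono' := RS_mono h0 hlip
  right_continuous' x := ((RS_lip h0 hlip).continuous.continuousAt).continuousWithinAt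

/-- complement Stieltjes function -/
noncomputable def CSF (h0 : r 0 = 0)
    (hlip : ∀ ⦃s t : ℝ⦄, 0 ≤ s → s ≤ t → |r t - r s| ≤ t - s) : StieltjesFunction ℝ where
  toFun := fun t => t - RS r t
  mono' := by
    intro s t hst
    have := RS_sub_le h0 hlip hst
    simp only; linarith
  right_continuous' x :=
    (continuous_id.sub (RS_lip h0 hlip).continuous).continuousAt.continuousWithinAt

theorem RSF_measure_le : (RSF h0 hlip).measure ≤ volume := by
  have hadd : (RSF h0 hlip) + (CSF h0 hlip) = StieltjesFunction.id := by
    ext x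
    show RS r x + (x - RS r x) = x
    ring
  rw [Measure.le_iff]
  intro s hs
  have h2 : volume s = ((RSF h0 hlip).measure + (CSF h0 hlip).measure) s := by
    rw [← StieltjesFunction.measure_add, hadd, Real.volume_eq_stieltjes_id]
  rw [h2, Measure.coe_add, Pi.add_apply]
  exact le_self_add

theorem RSF_ac : (RSF h0 hlip).measure ≪ volume :=
  Measure.absolutelyContinuous_of_le (RSF_measure_le h0 hlip)

theorem RSF_withDensity :
    volume.withDensity ((RSF h0 hlip).measure.rnDeriv volume) = (RSF h0 hlip).measure :=
  Measure.withDensity_rnDeriv_eq _ _ (RSF_ac h0 hlip)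

end basic


section slopes
variable (hge : ∀ ⦃u : ℝ⦄, 0 ≤ u → r u ≤ RS r u)
include hge


/-- left-quotient comparison: at a point where `r` touches its running sup,
the derivative of the running sup is at most that of `r`. -/
theorem deriv_le_deriv {t c : ℝ} (ht : 0 < t) (heq : r t = RS r t)
    (hR : HasDerivAt (RS r) c t) (hdr : DifferentiableAt ℝ r t) : c ≤ deriv r t := by
  have h1 : Tendsto (slope (RS r) t) (𝓝[<] t) (𝓝 c) :=
    (hasDerivAt_iff_tendsto_slope.1 hR).mono_left
      (nhdsWithin_mono _ (fun u hu => ne_of_lt hu))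
  have h2 : Tendsto (slope r t) (𝓝[<] t) (𝓝 (deriv r t)) :=
    (hasDerivAt_iff_tendsto_slope.1 hdr.hasDerivAt).mono_left
      (nhdsWithin_mono _ (fun u hu => ne_of_lt hu))
  refine le_of_tendsto_of_tendsto h1 h2 ?_
  filter_upwards [Ioo_mem_nhdsLT ht] with u hu
  have hru : r u ≤ RS r u := hge hu.1.le
  rw [slope_def_field, slope_def_field]
  have hut : u - t < 0 := sub_neg.2 hu.2
  rw [div_le_div_right_of_neg hut, ← heq]; linarith

/-- right-quotient comparison. -/
theorem deriv_ge_deriv {t c : ℝ} (ht : 0 ≤ t) (heq : r t = RS r t)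
    (hR : HasDerivAt (RS r) c t) (hdr : DifferentiableAt ℝ r t) : deriv r t ≤ c := by
  have h1 : Tendsto (slope (RS r) t) (𝓝[>] t) (𝓝 c) :=
    (hasDerivAt_iff_tendsto_slope.1 hR).mono_left
      (nhdsWithin_mono _ (fun u hu => ne_of_gt hu))
  have h2 : Tendsto (slope r t) (𝓝[>] t) (𝓝 (deriv r t)) :=
    (hasDerivAt_iff_tendsto_slope.1 hdr.hasDerivAt).mono_left
      (nhdsWithin_mono _ (fun u hu => ne_of_gt hu))
  refine le_of_tendsto_of_tendsto h2 h1 ?_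
  filter_upwards [self_mem_nhdsWithin] with u (hu : t < u)
  have hru : r u ≤ RS r u := hge (ht.trans hu.le)
  rw [slope_def_field, slope_def_field]
  have hut : 0 < u - t := sub_pos.2 hu
  rw [div_le_div_iff_of_pos_right hut, ← heq]; linarith


end slopes

section flat
variable (h0 : r 0 = 0) (hlip : ∀ ⦃s t : ℝ⦄, 0 ≤ s → s ≤ t → |r t - r s| ≤ t - s)
include h0 hlip

theorem RS_locally_const (hc : Continuous r) {t : ℝ} (ht : 0 < t) (hlt : r t < RS r t) :
    ∃ η > 0, ∀ u ∈ Ioo (t - η) (t + η), RS r u = RS r t := by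
  set c := (r t + RS r t) / 2 with hcdef
  have hc1 : r t < c := by rw [hcdef]; linarith
  have hc2 : c < RS r t := by rw [hcdef]; linarith
  have hV : IsOpen {u : ℝ | r u < c} := isOpen_lt hc continuous_const
  obtain ⟨η₀, hη₀, hball⟩ := Metric.isOpen_iff.1 hV t hc1
  set η := min (η₀ / 2) (t / 2) with hηdef
  have hη : 0 < η := lt_min (by linarith) (by linarith)
  have hηt : η < t := (min_le_right _ _).trans_lt (by linarith)
  have hsub : ∀ u ∈ Ioo (t - η) (t + η), r u < c := by
    intro u hu
    apply hball
    rw [Metric.mem_ball, Real.dist_eq, abs_lt]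
    have : η ≤ η₀ / 2 := min_le_left _ _
    constructor <;> [skip; skip] <;> cases hu with
    | intro h1 h2 => linarith
  refine ⟨η, hη, fun u hu => ?_⟩
  have hu0 : 0 < u := lt_of_le_of_lt (by linarith : (0:ℝ) ≤ t - η) hu.1
  rcases le_total u t with hut | hut
  · -- show RS r t ≤ RS r u
    refine le_antisymm (RS_mono h0 hlip hut) ?_
    have hb : RS r t ≤ max (RS r u) c := by
      apply Real.sSup_le
      · rintro x ⟨v, hv, rfl⟩
        rcases le_or_gt v u with hvu | hvu
        · exact le_max_of_le_left (le_csSup (bddA h0 hlip) ⟨v, ⟨hv.1, hvu⟩, rfl⟩)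
        · exact le_max_of_le_right (hsub v ⟨by linarith [hu.1], by linarith [hv.2]⟩).le
      · exact le_max_of_le_left (RS_nonneg h0 hlip hu0.le)
    rcases max_cases (RS r u) c with ⟨h, _⟩ | ⟨h, _⟩
    · rwa [h] at hb
    · rw [h] at hb; linarith
  · -- show RS r u ≤ RS r t
    refine le_antisymm ?_ (RS_mono h0 hlip hut)
    apply Real.sSup_le
    · rintro x ⟨v, hv, rfl⟩
      rcases le_or_gt v t with hvt | hvt
      · exact le_csSup (bddA h0 hlip) ⟨v, ⟨hv.1, hvt⟩, rfl⟩
      · have : r v < c := hsub v ⟨by linarith, by linarith [hv.2, hu.2]⟩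
        linarith [hc2.le]
    · exact RS_nonneg h0 hlip ht.le

theorem mu_flat (hc : Continuous r) :
    (RSF h0 hlip).measure {t : ℝ | 0 < t ∧ r t < RS r t} = 0 := by
  apply measure_null_of_locally_null
  rintro t ⟨ht, hlt⟩
  obtain ⟨η, hη, hconst⟩ := RS_locally_const h0 hlip hc ht hlt
  refine ⟨Ioo (t - η/2) (t + η/2), mem_nhdsWithin_of_mem_nhds (Ioo_mem_nhds (by linarith) (by linarith)), ?_⟩
  have h1 : (RSF h0 hlip).measure (Ioo (t - η/2) (t + η/2)) ≤
      (RSF h0 hlip).measure (Ioc (t - η/2) (t + η/2)) := measure_mono Ioo_subset_Ioc_self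
  rw [StieltjesFunction.measure_Ioc] at h1
  have e1 : (RSF h0 hlip) (t + η/2) = RS r t := hconst _ ⟨by linarith, by linarith⟩
  have e2 : (RSF h0 hlip) (t - η/2) = RS r t := hconst _ ⟨by linarith, by linarith⟩
  rw [e1, e2, sub_self, ENNReal.ofReal_zero, nonpos_iff_eq_zero] at h1
  exact h1

end flat

end Stmt18

open Stmt18 MeasureTheory Filter Topology ENNReal

/-- Linear growth of the frontier-time sequence: under the length comparison
`|γ(l)| ≤ l ≤ D|γ(l)|` (for `l ≥ L`), the successive `2ρ̃`-separated frontier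
times `l_j` satisfy `l_j ≤ A·j` with `A = 8ρ̃/(βδ)`. -/
theorem stmt_18 (d : ℕ) (γ : ℝ → EuclideanSpace ℝ (Fin d))
    (hγC1 : ContDiff ℝ 1 γ) (hγ0 : γ 0 = 0)
    (hunit : ∀ s : ℝ, 0 ≤ s → ‖deriv γ s‖ = 1)
    (r : ℝ → ℝ) (hr : r = fun s => ‖γ s‖)
    (D L : ℝ) (hD : 1 ≤ D) (hL : 0 ≤ L)
    (hcomp : ∀ s : ℝ, L ≤ s → r s ≤ s ∧ s ≤ D * r s)
    (β δ A ρ' : ℝ) (hβ : β = 1 / (2 * D)) (hδ : δ = 1 / (2 * D - 1))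
    (hρ' : 0 < ρ') (hA : A = 8 * ρ' / (β * δ))
    (F : Set ℝ)
    (hF : F = { s : ℝ | 0 ≤ s ∧ deriv r s > β ∧ r s = sSup (r '' Icc 0 s) })
    (l : ℕ → ℝ) (hl0 : l 0 = 0)
    (hlrec : ∀ j : ℕ, 1 ≤ j →
      l j ∈ { s | s ∈ F ∧ l (j - 1) < s ∧ ∀ j' < j, 2 * ρ' ≤ ‖γ s - γ (l j')‖ } ∧
      l j = sInf { s | s ∈ F ∧ l (j - 1) < s ∧ ∀ j' < j, 2 * ρ' ≤ ‖γ s - γ (l j')‖ }) :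
    ∀ j : ℕ, L ≤ l j → l j ≤ A * j := by
  -- positivity facts
  have hD0 : (0:ℝ) < D := lt_of_lt_of_le one_pos hD
  have hβ0 : 0 < β := by rw [hβ]; positivity
  have hβ1 : β < 1 := by
    rw [hβ, div_lt_one (by linarith)]; linarith
  have hδ0 : 0 < δ := by rw [hδ]; apply div_pos one_pos; linarith
  -- basic facts about r
  have hγcont : Continuous γ := hγC1.continuous
  have hrc : Continuous r := by rw [hr]; exact hγcont.norm
  have hr0 : r 0 = 0 := by rw [hr]; simp [hγ0]
  have hγlip : ∀ ⦃s t : ℝ⦄, 0 ≤ s → 0 ≤ t → ‖γ t - γ s‖ ≤ |t - s| := by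
    intro s t hs ht
    have := Convex.norm_image_sub_le_of_norm_deriv_le
      (f := γ) (C := 1) (s := Ici (0:ℝ))
      (fun x _ => (hγC1.differentiable one_ne_zero).differentiableAt)
      (fun x hx => le_of_eq (hunit x hx)) (convex_Ici 0) hs ht
    rwa [one_mul, Real.norm_eq_abs] at this
  have hlip : ∀ ⦃s t : ℝ⦄, 0 ≤ s → s ≤ t → |r t - r s| ≤ t - s := by
    intro s t hs hst
    have h1 : |r t - r s| ≤ ‖γ t - γ s‖ := by rw [hr]; exact abs_norm_sub_norm_le _ _
    have h2 := hγlip hs (hs.trans hst)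
    rw [abs_of_nonneg (sub_nonneg.2 hst)] at h2
    linarith
  have hrle : ∀ ⦃s t : ℝ⦄, 0 ≤ s → 0 ≤ t → |r t - r s| ≤ |t - s| := by
    intro s t hs ht
    rcases le_total s t with h | h
    · rw [abs_of_nonneg (sub_nonneg.2 h)]; exact hlip hs h
    · rw [abs_sub_comm (r t), abs_sub_comm t]
      rw [abs_of_nonneg (sub_nonneg.2 h)]; exact hlip ht h
  have hge : ∀ ⦃u : ℝ⦄, 0 ≤ u → r u ≤ RS r u := fun u hu => le_RS hr0 hlip hu
  have hRS0 : RS r 0 = 0 := by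
    rw [RS]; simp only [Icc_self, image_singleton, csSup_singleton, hr0]
  have hFRS : F = { s : ℝ | 0 ≤ s ∧ deriv r s > β ∧ r s = RS r s } := hF
  -- F is contained in [0, ∞)
  have hFpos : ∀ t ∈ F, 0 ≤ t := by rw [hF]; rintro t ⟨h, _, _⟩; exact h
  -- Stieltjes setup
  set f := RSF hr0 hlip with hfdef
  set μ := f.measure with hμdef
  set w := μ.rnDeriv volume with hwdef
  have hfx : ∀ x, f x = RS r x := fun x => rfl
  have hle : μ ≤ volume := RSF_measure_le hr0 hlip
  have hwd : volume.withDensity w = μ := RSF_withDensity hr0 hlip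
  have hmuE : ∀ E : Set ℝ, MeasurableSet E → μ E = ∫⁻ t in E, w t := by
    intro E hE; rw [← hwd, withDensity_apply _ hE]
  have hmuIoc : ∀ a b : ℝ, μ (Ioc a b) = ENNReal.ofReal (RS r b - RS r a) :=
    fun a b => f.measure_Ioc a b
  -- Rademacher a.e. differentiability of r on (0, ∞)
  have hrad : ∀ᵐ t : ℝ, 0 < t → DifferentiableAt ℝ r t := by
    have hlipmax : LipschitzWith 1 (fun t : ℝ => r (max t 0)) := by
      apply LipschitzWith.of_dist_le_mul
      intro s t
      rw [Real.dist_eq, Real.dist_eq, NNReal.coe_one, one_mul]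
      exact (hrle (le_max_right t 0) (le_max_right s 0)).trans (abs_max_sub_max_le_abs _ _ _)
    filter_upwards [hlipmax.ae_differentiableAt] with t h ht
    have hev : (fun u : ℝ => r (max u 0)) =ᶠ[𝓝 t] r := by
      filter_upwards [Ioi_mem_nhds ht] with u (hu : 0 < u)
      simp [max_eq_left hu.le]
    exact (Filter.EventuallyEq.differentiableAt_iff hev).1 h
  have haene : ∀ᵐ t : ℝ, t ≠ (0:ℝ) := by
    rw [ae_iff]
    simp only [ne_eq, not_not, setOf_eq_eq_singleton]
    exact Real.volume_singleton
  -- a.e. lower bound for the density on F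
  have haeF : ∀ᵐ t : ℝ, t ∈ F → ENNReal.ofReal β ≤ w t := by
    filter_upwards [f.ae_hasDerivAt, hrad, haene] with t h1 h2 h3 htF
    rw [hFRS] at htF
    obtain ⟨ht0, hdr, heq⟩ := htF
    have ht : 0 < t := lt_of_le_of_ne ht0 (Ne.symm h3)
    have hd := deriv_ge_deriv hge ht0 heq h1 (h2 ht)
    exact ENNReal.ofReal_le_of_le_toReal (hdr.le.trans hd)
  -- a.e. upper bound off F and off the flat set
  have haeG : ∀ᵐ t : ℝ, (0 < t ∧ t ∉ F ∧ ¬(r t < RS r t)) → w t ≤ ENNReal.ofReal β := by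
    filter_upwards [f.ae_hasDerivAt, hrad, Measure.rnDeriv_lt_top μ volume]
      with t h1 h2 hfin ⟨ht, htF, htU⟩
    have heq : r t = RS r t := le_antisymm (hge ht.le) (not_lt.1 htU)
    rw [hFRS] at htF
    simp only [mem_setOf_eq, not_and] at htF
    have hdrβ : deriv r t ≤ β := not_lt.1 (fun hcon => (htF ht.le hcon) heq)
    have hd := deriv_le_deriv hge ht heq h1 (h2 ht)
    calc w t = ENNReal.ofReal (w t).toReal := (ENNReal.ofReal_toReal hfin.ne).symm
      _ ≤ ENNReal.ofReal β := ENNReal.ofReal_le_ofReal (hd.trans hdrβ)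
  -- measurability of F
  have hFm : MeasurableSet F := by
    rw [hFRS]
    have h1 : MeasurableSet {s : ℝ | 0 ≤ s} := measurableSet_Ici
    have h2 : MeasurableSet {s : ℝ | deriv r s > β} :=
      measurableSet_lt measurable_const (measurable_deriv r)
    have h3 : MeasurableSet {s : ℝ | r s = RS r s} :=
      (isClosed_eq hrc (RS_lip hr0 hlip).continuous).measurableSet
    have : { s : ℝ | 0 ≤ s ∧ deriv r s > β ∧ r s = RS r s } =
        {s : ℝ | 0 ≤ s} ∩ ({s : ℝ | deriv r s > β} ∩ {s : ℝ | r s = RS r s}) := by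
      ext x; simp [mem_setOf_eq, mem_inter_iff]
    rw [this]
    exact h1.inter (h2.inter h3)
  -- lower bound: β · vol E ≤ μ E for measurable E ⊆ F
  have hlow : ∀ E : Set ℝ, MeasurableSet E → E ⊆ F → ENNReal.ofReal β * volume E ≤ μ E := by
    intro E hE hEF
    rw [hmuE E hE]
    calc ENNReal.ofReal β * volume E = ∫⁻ _ in E, ENNReal.ofReal β := by
          rw [setLIntegral_const]
      _ ≤ ∫⁻ t in E, w t := by
          apply setLIntegral_mono_ae' hE
          filter_upwards [haeF] with t ht htE
          exact ht (hEF htE)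
  -- the flat set
  set U : Set ℝ := {t : ℝ | 0 < t ∧ r t < RS r t} with hUdef
  have hUopen : IsOpen U := by
    have : U = Ioi 0 ∩ {t : ℝ | r t < RS r t} := rfl
    rw [this]
    exact isOpen_Ioi.inter (isOpen_lt hrc (RS_lip hr0 hlip).continuous)
  have hUnull : μ U = 0 := mu_flat hr0 hlip hrc
  -- density lemma
  have hdens : ∀ s : ℝ, L ≤ s → δ * s ≤ (volume (F ∩ Ioc 0 s)).toReal := by
    intro s hLs
    have hs0 : 0 ≤ s := hL.trans hLs
    set m := volume (F ∩ Ioc 0 s) with hm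
    set m2 := volume ((Ioc 0 s) \ F) with hm2
    have hmfin : m ≠ ∞ := by
      apply ne_of_lt
      calc m ≤ volume (Ioc 0 s) := measure_mono inter_subset_right
        _ < ∞ := measure_Ioc_lt_top
    have hm2fin : m2 ≠ ∞ := by
      apply ne_of_lt
      calc m2 ≤ volume (Ioc 0 s) := measure_mono diff_subset
        _ < ∞ := measure_Ioc_lt_top
    have hsplit : m + m2 = ENNReal.ofReal s := by
      rw [hm, hm2, inter_comm, measure_inter_add_diff _ hFm, Real.volume_Ioc, sub_zero]
    -- G := Ioc 0 s \ F \ U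
    set G : Set ℝ := ((Ioc 0 s) \ F) \ U with hG
    have hGm : MeasurableSet G := ((measurableSet_Ioc.diff hFm).diff hUopen.measurableSet)
    have hGsub : ∀ t ∈ G, 0 < t ∧ t ∉ F ∧ ¬(r t < RS r t) := by
      rintro t ⟨⟨ht1, ht2⟩, ht3⟩
      exact ⟨ht1.1, ht2, fun hlt => ht3 ⟨ht1.1, hlt⟩⟩
    have hμG : μ G ≤ ENNReal.ofReal β * m2 := by
      rw [hmuE G hGm]
      calc ∫⁻ t in G, w t ≤ ∫⁻ _ in G, ENNReal.ofReal β := by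
            apply setLIntegral_mono_ae' hGm
            filter_upwards [haeG] with t ht htG
            exact ht (hGsub t htG)
        _ = ENNReal.ofReal β * volume G := by rw [setLIntegral_const]
        _ ≤ ENNReal.ofReal β * m2 := by
            exact mul_le_mul_right (measure_mono diff_subset) _
    have hμFIoc : μ (F ∩ Ioc 0 s) ≤ m := by
      rw [Measure.le_iff] at hle
      exact hle _ (hFm.inter measurableSet_Ioc)
    have hcoverIoc : Ioc 0 s ⊆ (F ∩ Ioc 0 s) ∪ U ∪ G := by
      intro t ht
      by_cases h1 : t ∈ F
      · exact Or.inl (Or.inl ⟨h1, ht⟩)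
      by_cases h2 : t ∈ U
      · exact Or.inl (Or.inr h2)
      · exact Or.inr ⟨⟨ht, h1⟩, h2⟩
    have hmain : ENNReal.ofReal (RS r s) ≤ m + ENNReal.ofReal β * m2 := by
      calc ENNReal.ofReal (RS r s) = μ (Ioc 0 s) := by
            rw [hmuIoc 0 s, hRS0, sub_zero]
        _ ≤ μ (F ∩ Ioc 0 s) + μ U + μ G := by
            refine le_trans (measure_mono hcoverIoc) ?_
            exact le_trans (measure_union_le _ _) (add_le_add_left (measure_union_le _ _) _)
        _ ≤ m + ENNReal.ofReal β * m2 := by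
            rw [hUnull, add_zero]
            exact add_le_add hμFIoc hμG
    -- convert to reals
    have hRs : RS r s ≤ m.toReal + β * m2.toReal := by
      have h1 : (m + ENNReal.ofReal β * m2) ≠ ∞ := by
        apply ne_of_lt
        apply ENNReal.add_lt_top.2
        exact ⟨hmfin.lt_top, ENNReal.mul_lt_top ENNReal.ofReal_lt_top hm2fin.lt_top⟩
      have h2 := ENNReal.toReal_mono h1 hmain
      rw [ENNReal.toReal_ofReal (RS_nonneg hr0 hlip hs0)] at h2
      rw [ENNReal.toReal_add hmfin (ENNReal.mul_lt_top ENNReal.ofReal_lt_top hm2fin.lt_top).ne,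
        ENNReal.toReal_mul, ENNReal.toReal_ofReal hβ0.le] at h2
      exact h2
    have hsum : m.toReal + m2.toReal = s := by
      have := congrArg ENNReal.toReal hsplit
      rwa [ENNReal.toReal_add hmfin hm2fin, ENNReal.toReal_ofReal hs0] at this
    have hcs := hcomp s hLs
    have hrsRS : s / D ≤ RS r s := by
      have h1 : s / D ≤ r s := by
        rw [div_le_iff₀ hD0]
        linarith [hcs.2]
      exact h1.trans (hge hs0)
    -- algebra
    have hm0 : 0 ≤ m.toReal := ENNReal.toReal_nonneg
    have hm20 : 0 ≤ m2.toReal := ENNReal.toReal_nonneg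
    have hδD : δ * (2 * D - 1) = 1 := by
      rw [hδ, one_div, inv_mul_cancel₀ (by linarith)]
    have hDβ : D * β = 1 / 2 := by
      rw [hβ]; field_simp
    set x := m.toReal
    set y := m2.toReal
    have e1 : s / D ≤ x + β * y := hrsRS.trans hRs
    have e2 : s ≤ D * x + D * β * y := by
      calc s = D * (s / D) := by field_simp
        _ ≤ D * (x + β * y) := mul_le_mul_of_nonneg_left e1 hD0.le
        _ = D * x + D * β * y := by ring
    have e3 : s ≤ D * x + y / 2 := by rw [hDβ] at e2; linarith
    have e4 : s ≤ (2 * D - 1) * x := by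
      have : y = s - x := by linarith
      rw [this] at e3; linarith
    have e5 : δ * ((2 * D - 1) * x) = x := by rw [← mul_assoc, hδD, one_mul]
    calc δ * s ≤ δ * ((2 * D - 1) * x) := mul_le_mul_of_nonneg_left e4 hδ0.le
      _ = x := e5
  -- ball lemma: near any point, the frontier set has measure at most 4ρ'/β
  have hball : ∀ (x : EuclideanSpace ℝ (Fin d)) (b₀ : ℝ),
      volume {t : ℝ | t ∈ F ∧ t ≤ b₀ ∧ ‖γ t - x‖ ≤ 2 * ρ'} ≤ ENNReal.ofReal (4 * ρ' / β) := by
    intro x b₀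
    set I : Set ℝ := {t : ℝ | t ∈ F ∧ t ≤ b₀ ∧ ‖γ t - x‖ ≤ 2 * ρ'} with hIdef
    rcases eq_empty_or_nonempty I with hIe | hIne
    · rw [hIe]; simp
    have hIsub : I ⊆ Icc 0 b₀ := fun t ht => ⟨hFpos t ht.1, ht.2.1⟩
    have hbdd : BddBelow I := ⟨0, fun t ht => (hIsub ht).1⟩
    have hbddA : BddAbove I := ⟨b₀, fun t ht => (hIsub ht).2⟩
    set a := sInf I with ha
    set b := sSup I with hb
    have hab : a ≤ b := csInf_le_csSup hIne hbdd hbddA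
    have ha0 : 0 ≤ a := le_csInf hIne (fun t ht => (hIsub ht).1)
    -- key: RS r b - RS r a ≤ 4 ρ'
    have hkey : RS r b - RS r a ≤ 4 * ρ' := by
      apply _root_.le_of_forall_pos_le_add
      intro ε hε
      obtain ⟨p, hpI, hpa⟩ := exists_lt_of_csInf_lt hIne (lt_add_of_pos_right a (half_pos hε))
      obtain ⟨q, hqI, hqb⟩ := exists_lt_of_lt_csSup hIne (sub_lt_self b (half_pos hε))
      have hpa' : a ≤ p := csInf_le hbdd hpI
      have hqb' : q ≤ b := le_csSup hbddA hqI
      have h1 : RS r b - RS r q ≤ ε / 2 := by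
        have := RS_sub_le hr0 hlip hqb'
        linarith
      have h2 : RS r p - RS r a ≤ ε / 2 := by
        have := RS_sub_le hr0 hlip hpa'
        linarith
      have hp0 : 0 ≤ p := hFpos p hpI.1
      have hq0 : 0 ≤ q := hFpos q hqI.1
      have hreq : ∀ t ∈ I, r t = RS r t := by
        intro t ht
        have := ht.1; rw [hFRS] at this; exact this.2.2
      have h3 : RS r q - RS r p ≤ 4 * ρ' := by
        rcases le_total q p with h | h
        · have := RS_mono hr0 hlip h
          linarith [hρ']
        · rw [← hreq q hqI, ← hreq p hpI]
          have hn : |r q - r p| ≤ ‖γ q - γ p‖ := by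
            rw [hr]; exact abs_norm_sub_norm_le _ _
          have ht : ‖γ q - γ p‖ ≤ ‖γ q - x‖ + ‖γ p - x‖ := by
            have : γ q - γ p = (γ q - x) - (γ p - x) := by abel
            rw [this]
            exact norm_sub_le _ _
          have := hqI.2.2
          have := hpI.2.2
          have := abs_le.1 hn
          linarith
      linarith
    have hvfin : volume I ≠ ∞ := by
      apply ne_of_lt
      calc volume I ≤ volume (Icc 0 b₀) := measure_mono hIsub
        _ < ∞ := measure_Icc_lt_top
    -- I is measurable
    have hIm : MeasurableSet I := by
      have : I = F ∩ (Iic b₀ ∩ {t : ℝ | ‖γ t - x‖ ≤ 2 * ρ'}) := by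
        ext t
        constructor
        · rintro ⟨h1, h2, h3⟩; exact ⟨h1, h2, h3⟩
        · rintro ⟨h1, h2, h3⟩; exact ⟨h1, h2, h3⟩
      rw [this]
      exact hFm.inter (measurableSet_Iic.inter
        ((isClosed_le ((hγcont.sub continuous_const).norm) continuous_const).measurableSet))
    have hIFIoc : volume I ≤ volume (F ∩ Ioc a b) + volume {a} := by
      have : I ⊆ (F ∩ Ioc a b) ∪ {a} := by
        intro t ht
        have h1 : a ≤ t := csInf_le hbdd ht
        have h2 : t ≤ b := le_csSup hbddA ht
        rcases eq_or_lt_of_le h1 with h | h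
        · exact Or.inr (by simp [← h])
        · exact Or.inl ⟨ht.1, h, h2⟩
      exact le_trans (measure_mono this) (measure_union_le _ _)
    rw [Real.volume_singleton, add_zero] at hIFIoc
    have hμIab : ENNReal.ofReal β * volume (F ∩ Ioc a b) ≤ ENNReal.ofReal (4 * ρ') := by
      calc ENNReal.ofReal β * volume (F ∩ Ioc a b) ≤ μ (F ∩ Ioc a b) :=
            hlow _ (hFm.inter measurableSet_Ioc) inter_subset_left
        _ ≤ μ (Ioc a b) := measure_mono inter_subset_right
        _ = ENNReal.ofReal (RS r b - RS r a) := hmuIoc a b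
        _ ≤ ENNReal.ofReal (4 * ρ') := ENNReal.ofReal_le_ofReal hkey
    have hvI : ENNReal.ofReal β * volume I ≤ ENNReal.ofReal (4 * ρ') :=
      le_trans (mul_le_mul_right hIFIoc _) hμIab
    -- conclude
    have hfin2 : volume (F ∩ Ioc a b) ≠ ∞ := by
      apply ne_of_lt
      calc volume (F ∩ Ioc a b) ≤ volume (Ioc a b) := measure_mono inter_subset_right
        _ < ∞ := measure_Ioc_lt_top
    rw [ENNReal.le_ofReal_iff_toReal_le hvfin (by positivity)]
    have h5 := ENNReal.toReal_mono ENNReal.ofReal_ne_top hvI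
    rw [ENNReal.toReal_mul, ENNReal.toReal_ofReal hβ0.le,
      ENNReal.toReal_ofReal (by positivity : (0:ℝ) ≤ 4 * ρ')] at h5
    rw [le_div_iff₀ hβ0]
    linarith
  -- l is strictly monotone and nonnegative
  have hlpos : ∀ k, 0 ≤ l k := by
    intro k
    rcases Nat.eq_zero_or_pos k with h | h
    · rw [h, hl0]
    · exact hFpos _ ((hlrec k h).1).1
  -- covering lemma
  have hcover : ∀ j : ℕ, F ∩ Icc 0 (l j) ⊆
      ⋃ k ∈ Finset.range (j + 1), {t : ℝ | t ∈ F ∧ t ≤ l j ∧ ‖γ t - γ (l k)‖ ≤ 2 * ρ'} := by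
    intro j
    rintro s ⟨hsF, hs0, hsj⟩
    by_contra hcon
    simp only [mem_iUnion, Finset.mem_range, not_exists, mem_setOf_eq, not_and] at hcon
    have hsep : ∀ k, k ≤ j → 2 * ρ' < ‖γ s - γ (l k)‖ := by
      intro k hk
      have := hcon k (by omega) hsF hsj
      exact not_le.1 this
    have hex : ∃ k, s ≤ l k := ⟨j, hsj⟩
    set k₀ := Nat.find hex with hk₀
    have hk₀j : k₀ ≤ j := Nat.find_min' hex hsj
    have hk₀le : s ≤ l k₀ := Nat.find_spec hex
    rcases Nat.eq_zero_or_pos k₀ with h0 | h0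
    · rw [h0, hl0] at hk₀le
      have : s = 0 := le_antisymm hk₀le hs0
      have h2 := hsep 0 (Nat.zero_le j)
      rw [this, hl0, sub_self, norm_zero] at h2
      linarith
    · have hprev : l (k₀ - 1) < s := by
        have := Nat.find_min hex (show k₀ - 1 < k₀ by omega)
        push_neg at this
        exact this
      have hmem : s ∈ { t : ℝ | t ∈ F ∧ l (k₀ - 1) < t ∧ ∀ j' < k₀, 2 * ρ' ≤ ‖γ t - γ (l j')‖ } :=
        ⟨hsF, hprev, fun j' hj' => (hsep j' (by omega)).le⟩
      have hbddS : BddBelow { t : ℝ | t ∈ F ∧ l (k₀ - 1) < t ∧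
          ∀ j' < k₀, 2 * ρ' ≤ ‖γ t - γ (l j')‖ } :=
        ⟨0, fun t ht => hFpos t ht.1⟩
      have : l k₀ ≤ s := by
        rw [(hlrec k₀ h0).2]
        exact csInf_le hbddS hmem
      have hseq : s = l k₀ := le_antisymm hk₀le this
      have h2 := hsep k₀ hk₀j
      rw [hseq, sub_self, norm_zero] at h2
      linarith
  -- main conclusion
  intro j hLj
  rcases Nat.eq_zero_or_pos j with h0 | h0
  · rw [h0, hl0]
    simp
  have hlj0 : 0 ≤ l j := hlpos j
  have hvol : volume (F ∩ Ioc 0 (l j)) ≤ ENNReal.ofReal (((j:ℝ) + 1) * (4 * ρ' / β)) := by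
    calc volume (F ∩ Ioc 0 (l j)) ≤ volume (F ∩ Icc 0 (l j)) :=
          measure_mono (inter_subset_inter_right _ Ioc_subset_Icc_self)
      _ ≤ volume (⋃ k ∈ Finset.range (j + 1),
            {t : ℝ | t ∈ F ∧ t ≤ l j ∧ ‖γ t - γ (l k)‖ ≤ 2 * ρ'}) :=
          measure_mono (hcover j)
      _ ≤ ∑ k ∈ Finset.range (j + 1),
            volume {t : ℝ | t ∈ F ∧ t ≤ l j ∧ ‖γ t - γ (l k)‖ ≤ 2 * ρ'} :=
          measure_biUnion_finset_le _ _
      _ ≤ ∑ _k ∈ Finset.range (j + 1), ENNReal.ofReal (4 * ρ' / β) :=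
          Finset.sum_le_sum (fun k _ => hball (γ (l k)) (l j))
      _ = ((j + 1 : ℕ) : ℝ≥0∞) * ENNReal.ofReal (4 * ρ' / β) := by
          rw [Finset.sum_const, Finset.card_range, nsmul_eq_mul]
      _ = ENNReal.ofReal (((j:ℝ) + 1) * (4 * ρ' / β)) := by
          rw [← ENNReal.ofReal_natCast (j+1), ← ENNReal.ofReal_mul (by positivity)]
          push_cast
          ring_nf
  have hvolR : (volume (F ∩ Ioc 0 (l j))).toReal ≤ ((j:ℝ) + 1) * (4 * ρ' / β) := by
    have h2 := ENNReal.toReal_mono ENNReal.ofReal_ne_top hvol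
    rwa [ENNReal.toReal_ofReal (by positivity)] at h2
  have hdj := hdens (l j) hLj
  have hfinal : δ * l j ≤ ((j:ℝ) + 1) * (4 * ρ' / β) := le_trans hdj hvolR
  -- algebra: conclude l j ≤ A * j
  have hj1 : (1:ℝ) ≤ (j:ℝ) := by exact_mod_cast h0
  have hstep : ((j:ℝ) + 1) * (4 * ρ' / β) ≤ (j:ℝ) * (8 * ρ' / β) := by
    have hq : 0 ≤ 4 * ρ' / β := by positivity
    have h2 : ((j:ℝ) + 1) ≤ 2 * (j:ℝ) := by linarith
    calc ((j:ℝ) + 1) * (4 * ρ' / β) ≤ (2 * (j:ℝ)) * (4 * ρ' / β) :=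
          mul_le_mul_of_nonneg_right h2 hq
      _ = (j:ℝ) * (8 * ρ' / β) := by ring
  have h6 : δ * l j ≤ (j:ℝ) * (8 * ρ' / β) := hfinal.trans hstep
  have h7 : l j ≤ ((j:ℝ) * (8 * ρ' / β)) / δ := by
    rw [le_div_iff₀ hδ0]; linarith
  calc l j ≤ ((j:ℝ) * (8 * ρ' / β)) / δ := h7
    _ = A * j := by
        rw [hA]
        field_simp
end
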